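/- Let G be a finite group of even order that is not a p-group for any prime p. Then the order superpower graph S(G) is not minimally edge connected. -/

import Mathlib

/-- The degree of a vertex: the number of its neighbours. -/
noncomputable def gDeg {V : Type*} (G : SimpleGraph V) (v : V) : ℕ :=
  (G.neighborSet v).ncard

/-- The minimum degree of a graph. -/
noncomputable def minDeg {V : Type*} (G : SimpleGraph V) : ℕ :=
  sInf (Set.range (gDeg G))

/-- The edge connectivity: the minimum size of a set of edges whose removal
disconnects the graph. -/
noncomputable def edgeConn {V : Type*} (G : SimpleGraph V) : ℕ :=
  sInf {n : ℕ | ∃ S : Set (Sym2 V), S ⊆ G.edgeSet ∧ S.ncard = n ∧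
    ¬ (G.deleteEdges S).Connected}

/-- The vertex connectivity: the minimum size of a set of vertices whose removal
disconnects the graph or leaves a single vertex. -/
noncomputable def vertexConn {V : Type*} (G : SimpleGraph V) : ℕ :=
  sInf {n : ℕ | ∃ S : Set V, S.ncard = n ∧ Sᶜ.Nonempty ∧
    (¬ (G.induce Sᶜ).Preconnected ∨ Sᶜ.ncard = 1)}

/-- A graph is minimally edge connected if deleting any edge decreases the
edge connectivity by one. -/
def MinEdgeConnected {V : Type*} (G : SimpleGraph V) : Prop :=
  ∀ e ∈ G.edgeSet, edgeConn (G.deleteEdges {e}) = edgeConn G - 1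

/-- A graph is minimally connected if deleting any edge decreases the
vertex connectivity by one. -/
def MinConnected {V : Type*} (G : SimpleGraph V) : Prop :=
  ∀ e ∈ G.edgeSet, vertexConn (G.deleteEdges {e}) = vertexConn G - 1

/-- The power graph of a group: distinct `x, y` are adjacent iff one is a
natural power of the other. -/
def powerGraph (G : Type*) [Group G] : SimpleGraph G :=
  SimpleGraph.fromRel (fun x y => ∃ m : ℕ, y = x ^ m)

/-- The enhanced power graph of a group: distinct `x, y` are adjacent iff they
lie in a common cyclic subgroup. -/
def enhancedPowerGraph (G : Type*) [Group G] : SimpleGraph G :=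
  SimpleGraph.fromRel
    (fun x y => ∃ z : G, x ∈ Subgroup.zpowers z ∧ y ∈ Subgroup.zpowers z)

/-- The order superpower graph of a group: distinct `x, y` are adjacent iff the
order of one divides the order of the other. -/
def superpowerGraph (G : Type*) [Group G] : SimpleGraph G :=
  SimpleGraph.fromRel (fun x y => orderOf x ∣ orderOf y)

section Aux

open SimpleGraph

variable {V : Type*}

lemma exists_adj_of_reachable {H : SimpleGraph V} {a b : V} (h : H.Reachable a b)
    (hab : a ≠ b) : ∃ c, H.Adj a c := by
  obtain ⟨w⟩ := h
  cases w with
  | nil => exact absurd rfl hab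
  | cons h _ => exact ⟨_, h⟩

lemma not_connected_of_isolated {H : SimpleGraph V} {v w : V} (hvw : v ≠ w)
    (h : ∀ u, ¬ H.Adj v u) : ¬ H.Connected := by
  intro hc
  obtain ⟨c, hadj⟩ := exists_adj_of_reachable (hc.preconnected v w) hvw
  exact h c hadj

lemma edgeConn_set_nonempty [Finite V] (H : SimpleGraph V) {v w : V} (hvw : v ≠ w) :
    {n : ℕ | ∃ S : Set (Sym2 V), S ⊆ H.edgeSet ∧ S.ncard = n ∧
      ¬ (H.deleteEdges S).Connected}.Nonempty := by
  refine ⟨H.edgeSet.ncard, H.edgeSet, subset_rfl, rfl,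
    not_connected_of_isolated hvw fun u hadj => ?_⟩
  rw [SimpleGraph.deleteEdges_adj] at hadj
  exact hadj.2 ((SimpleGraph.mem_edgeSet H).mpr hadj.1)

lemma edgeConn_mem [Finite V] (H : SimpleGraph V) {v w : V} (hvw : v ≠ w) :
    ∃ S : Set (Sym2 V), S ⊆ H.edgeSet ∧ S.ncard = edgeConn H ∧
      ¬ (H.deleteEdges S).Connected :=
  Nat.sInf_mem (edgeConn_set_nonempty H hvw)

lemma edgeConn_le_gDeg [Finite V] (H : SimpleGraph V) (v : V) {w : V} (hvw : v ≠ w) :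
    edgeConn H ≤ gDeg H v := by
  classical
  apply Nat.sInf_le
  refine ⟨H.incidenceSet v, H.incidenceSet_subset v, ?_,
    not_connected_of_isolated hvw fun u hadj => ?_⟩
  · rw [gDeg, ← Nat.card_coe_set_eq, ← Nat.card_coe_set_eq]
    exact Nat.card_congr (H.incidenceSetEquivNeighborSet v)
  · rw [SimpleGraph.deleteEdges_adj] at hadj
    exact hadj.2 (H.mk'_mem_incidenceSet_left_iff.mpr hadj.1)

lemma one_le_edgeConn [Finite V] {H : SimpleGraph V} (hconn : H.Connected) {v w : V}
    (hvw : v ≠ w) : 1 ≤ edgeConn H := by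
  obtain ⟨S, _, hcard, hdisc⟩ := edgeConn_mem H hvw
  rcases Nat.eq_zero_or_pos (edgeConn H) with h0 | h1
  · rw [h0, Set.ncard_eq_zero] at hcard
    rw [hcard, SimpleGraph.deleteEdges_empty] at hdisc
    exact absurd hconn hdisc
  · exact h1

lemma even_ncard_of_invol {α : Type*} [Finite α] (S : Set α) (f : α → α)
    (hmem : ∀ a ∈ S, f a ∈ S) (hff : ∀ a ∈ S, f (f a) = a)
    (hne : ∀ a ∈ S, f a ≠ a) : Even S.ncard := by
  classical
  have hfin := Fintype.ofFinite α
  rw [Set.ncard_eq_toFinset_card']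
  have h : (∑ _x ∈ S.toFinset, (1 : ZMod 2)) = 0 := by
    refine Finset.sum_involution (fun a _ => f a) (fun a _ => by decide)
      (fun a ha _ => hne a (Set.mem_toFinset.mp ha))
      (fun a ha => Set.mem_toFinset.mpr (hmem a (Set.mem_toFinset.mp ha)))
      (fun a ha => hff a (Set.mem_toFinset.mp ha))
  rw [Finset.sum_const, nsmul_eq_mul, mul_one] at h
  exact even_iff_two_dvd.mpr ((ZMod.natCast_eq_zero_iff _ 2).mp h)

end Aux

section Grp

variable {G : Type*} [Group G] [Fintype G]

lemma superpower_adj (a b : G) : (superpowerGraph G).Adj a b ↔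
    a ≠ b ∧ (orderOf a ∣ orderOf b ∨ orderOf b ∣ orderOf a) :=
  SimpleGraph.fromRel_adj _ a b

lemma hub_adj {x : G} (hx : x ≠ 1) : (superpowerGraph G).Adj 1 x := by
  rw [superpower_adj]
  exact ⟨Ne.symm hx, Or.inl (by rw [orderOf_one]; exact one_dvd _)⟩

lemma superpower_connected : (superpowerGraph G).Connected := by
  rw [SimpleGraph.connected_iff]
  refine ⟨fun a b => ?_, ⟨1⟩⟩
  have h1 : ∀ c : G, (superpowerGraph G).Reachable 1 c := by
    intro c
    by_cases hc : c = 1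
    · rw [hc]
    · exact (hub_adj hc).reachable
  exact (h1 a).symm.trans (h1 b)

lemma deg_eq_of_orderOf_prime {p : ℕ} (hp : p.Prime) {t : G} (ht : orderOf t = p) :
    gDeg (superpowerGraph G) t = {y : G | p ∣ orderOf y}.ncard := by
  have hset : (superpowerGraph G).neighborSet t
      = (insert (1 : G) {y : G | p ∣ orderOf y}) \ {t} := by
    ext y
    simp only [SimpleGraph.mem_neighborSet, Set.mem_diff, Set.mem_insert_iff,
      Set.mem_setOf_eq, Set.mem_singleton_iff]
    rw [superpower_adj, ht]
    constructor
    · rintro ⟨hne, h | h⟩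
      · exact ⟨Or.inr h, Ne.symm hne⟩
      · rcases (Nat.Prime.eq_one_or_self_of_dvd hp _ h) with h1 | h1
        · exact ⟨Or.inl (orderOf_eq_one_iff.mp h1), Ne.symm hne⟩
        · exact ⟨Or.inr (h1 ▸ dvd_refl _), Ne.symm hne⟩
    · rintro ⟨h1 | h1, hne⟩
      · exact ⟨Ne.symm hne, Or.inr (by rw [h1, orderOf_one]; exact one_dvd _)⟩
      · exact ⟨Ne.symm hne, Or.inl h1⟩
  have h1A : (1 : G) ∉ {y : G | p ∣ orderOf y} := by
    simp only [Set.mem_setOf_eq, orderOf_one, Nat.dvd_one]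
    exact hp.one_lt.ne'
  have htA : t ∈ insert (1 : G) {y : G | p ∣ orderOf y} :=
    Set.mem_insert_iff.mpr (Or.inr (by simp [ht]))
  rw [gDeg, hset, Set.ncard_diff_singleton_of_mem htA,
    Set.ncard_insert_of_notMem h1A (Set.toFinite _)]
  omega

lemma sq_eq_one_of_inv_eq {a : G} (h : a⁻¹ = a) : a * a = 1 := by
  nth_rewrite 1 [← h]
  exact inv_mul_cancel a

lemma even_ncard_q {q : ℕ} (hq : q.Prime) (hq2 : q ≠ 2) :
    Even {y : G | q ∣ orderOf y}.ncard := by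
  apply even_ncard_of_invol _ (fun y => y⁻¹)
  · intro a ha; simpa [orderOf_inv] using ha
  · intro a _; simp
  · intro a ha h
    have hd : orderOf a ∣ 2 :=
      orderOf_dvd_of_pow_eq_one (by rw [pow_two]; exact sq_eq_one_of_inv_eq h)
    have hq2' : q ∣ 2 := dvd_trans ha hd
    exact hq2 ((Nat.prime_dvd_prime_iff_eq hq Nat.prime_two).mp hq2')

lemma odd_ncard_two (heven : Even (Nat.card G)) :
    Odd {y : G | (2 : ℕ) ∣ orderOf y}.ncard := by
  classical
  set J : Set G := {y | y * y = 1} with hJdef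
  have hJc : Even Jᶜ.ncard := by
    apply even_ncard_of_invol _ (fun y => y⁻¹)
    · intro a ha hmem
      apply ha
      simp only [hJdef, Set.mem_setOf_eq] at hmem ⊢
      have h2 : (a * a)⁻¹ = 1 := by rw [mul_inv_rev]; exact hmem
      exact inv_eq_one.mp h2
    · intro a _; simp
    · intro a ha h
      exact ha (sq_eq_one_of_inv_eq h)
  have hsum : J.ncard + Jᶜ.ncard = Nat.card G := Set.ncard_add_ncard_compl J
  have hJ : Even J.ncard := by
    obtain ⟨a, ha⟩ := hJc
    obtain ⟨b, hb⟩ := heven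
    exact ⟨b - a, by omega⟩
  have h1J : (1 : G) ∈ J := by simp [hJdef]
  have hJpos : 1 ≤ J.ncard := (Set.ncard_pos (Set.toFinite _)).mpr ⟨1, h1J⟩
  have hI : {y : G | orderOf y = 2} = J \ {1} := by
    ext y
    simp only [Set.mem_setOf_eq, Set.mem_diff, Set.mem_singleton_iff, hJdef]
    constructor
    · intro h
      have hy2 : y ^ 2 = 1 := by rw [← h]; exact pow_orderOf_eq_one y
      refine ⟨by rw [← pow_two]; exact hy2, fun h1 => ?_⟩
      rw [h1, orderOf_one] at h; omega
    · rintro ⟨hyy, hy1⟩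
      exact orderOf_eq_prime (by rw [pow_two]; exact hyy) hy1
  have hIodd : Odd {y : G | orderOf y = 2}.ncard := by
    rw [hI, Set.ncard_diff_singleton_of_mem h1J]
    exact Nat.Even.sub_odd hJpos hJ odd_one
  have hBeven : Even {y : G | 2 ∣ orderOf y ∧ orderOf y ≠ 2}.ncard := by
    apply even_ncard_of_invol _ (fun y => y⁻¹)
    · intro a ha; simpa [orderOf_inv] using ha
    · intro a _; simp
    · intro a ha h
      have hd : orderOf a ∣ 2 :=
        orderOf_dvd_of_pow_eq_one (by rw [pow_two]; exact sq_eq_one_of_inv_eq h)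
      exact ha.2 (Nat.dvd_antisymm hd ha.1)
  have hsplit : {y : G | (2 : ℕ) ∣ orderOf y}
      = {y : G | orderOf y = 2} ∪ {y : G | 2 ∣ orderOf y ∧ orderOf y ≠ 2} := by
    ext y
    simp only [Set.mem_setOf_eq, Set.mem_union]
    constructor
    · intro h
      by_cases h2 : orderOf y = 2
      · exact Or.inl h2
      · exact Or.inr ⟨h, h2⟩
    · rintro (h | ⟨h, _⟩)
      · rw [h]
      · exact h
  have hdisj : Disjoint {y : G | orderOf y = 2} {y : G | 2 ∣ orderOf y ∧ orderOf y ≠ 2} := by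
    rw [Set.disjoint_left]
    rintro y hy1 hy2
    exact hy2.2 hy1
  rw [hsplit, Set.ncard_union_eq hdisj (Set.toFinite _) (Set.toFinite _)]
  exact hIodd.add_even hBeven

end Grp

/-- If `G` is a finite group of even order that is not a `p`-group
for any prime `p`, then its order superpower graph is not minimally edge
connected. -/
theorem stmt_9 (G : Type*) [Group G] [Fintype G]
    (heven : Even (Nat.card G))
    (hnp : ¬ ∃ p n : ℕ, p.Prime ∧ Nat.card G = p ^ n) :
    ¬ MinEdgeConnected (superpowerGraph G) := by
  classical
  intro hmin
  set Γ := superpowerGraph G with hΓ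
  have hn0 : Nat.card G ≠ 0 := Nat.card_pos.ne'
  -- there is an odd prime dividing |G|
  obtain ⟨q, hq, hqd, hq2⟩ : ∃ q : ℕ, q.Prime ∧ q ∣ Nat.card G ∧ q ≠ 2 := by
    by_contra hcon
    push_neg at hcon
    exact hnp ⟨2, _, Nat.prime_two,
      Nat.eq_prime_pow_of_unique_prime_dvd hn0 (fun {d} hd hdvd => hcon d hd hdvd)⟩
  haveI : Fact (Nat.Prime 2) := ⟨Nat.prime_two⟩
  haveI : Fact q.Prime := ⟨hq⟩
  obtain ⟨t, ht⟩ := exists_prime_orderOf_dvd_card (G := G) 2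
    (by rw [← Nat.card_eq_fintype_card]; exact even_iff_two_dvd.mp heven)
  obtain ⟨u, hu⟩ := exists_prime_orderOf_dvd_card (G := G) q
    (by rw [← Nat.card_eq_fintype_card]; exact hqd)
  have ht1 : t ≠ 1 := by
    intro h; rw [h, orderOf_one] at ht; omega
  have hu1 : u ≠ 1 := by
    intro h; rw [h, orderOf_one] at hu; have := hq.one_lt; omega
  -- degrees of t and u have different parity
  have hodd : Odd (gDeg Γ t) := by
    rw [hΓ, deg_eq_of_orderOf_prime Nat.prime_two ht]
    exact odd_ncard_two heven
  have hevenu : Even (gDeg Γ u) := by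
    rw [hΓ, deg_eq_of_orderOf_prime hq hu]
    exact even_ncard_q hq hq2
  have hne_deg : gDeg Γ t ≠ gDeg Γ u := by
    intro h
    rw [h] at hodd
    exact Nat.not_even_iff_odd.mpr hodd hevenu
  have hκt : edgeConn Γ ≤ gDeg Γ t := edgeConn_le_gDeg Γ t ht1
  have hκu : edgeConn Γ ≤ gDeg Γ u := edgeConn_le_gDeg Γ u hu1
  obtain ⟨x, hx1, hdx⟩ : ∃ x : G, x ≠ 1 ∧ edgeConn Γ < gDeg Γ x := by
    rcases lt_or_gt_of_ne hne_deg with h | h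
    · exact ⟨u, hu1, lt_of_le_of_lt hκt h⟩
    · exact ⟨t, ht1, lt_of_le_of_lt hκu h⟩
  have hadj1x : Γ.Adj 1 x := hub_adj hx1
  have he : s((1 : G), x) ∈ Γ.edgeSet := Γ.mem_edgeSet.mpr hadj1x
  have hκ1 : 1 ≤ edgeConn Γ := one_le_edgeConn superpower_connected ht1
  have hdel := hmin _ he
  obtain ⟨S, hSsub, hScard, hSdisc⟩ := edgeConn_mem (Γ.deleteEdges {s((1 : G), x)}) ht1
  rw [hdel] at hScard
  set T : Set (Sym2 G) := insert s((1 : G), x) S with hT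
  have heT : s((1 : G), x) ∈ T := Set.mem_insert _ _
  have hTsub : T ⊆ Γ.edgeSet :=
    Set.insert_subset he (hSsub.trans (SimpleGraph.edgeSet_mono (SimpleGraph.deleteEdges_le _)))
  have hTcard : T.ncard ≤ edgeConn Γ := by
    calc T.ncard ≤ S.ncard + 1 := Set.ncard_insert_le _ _
    _ = edgeConn Γ := by rw [hScard]; omega
  have hdisc : ¬ (Γ.deleteEdges T).Connected := by
    have h2 : ({s((1 : G), x)} : Set (Sym2 G)) ∪ S = T := by rw [hT, Set.singleton_union]
    rw [← h2, ← SimpleGraph.deleteEdges_deleteEdges]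
    exact hSdisc
  set A : Set G := {v | (Γ.deleteEdges T).Reachable 1 v} with hA
  have h1A : (1 : G) ∈ A := SimpleGraph.Reachable.refl 1
  have hAc : Aᶜ.Nonempty := by
    by_contra hc
    have hall : ∀ v : G, v ∈ A := by
      intro v; by_contra hv; exact hc ⟨v, hv⟩
    exact hdisc ((SimpleGraph.connected_iff _).mpr
      ⟨fun a b => (hall a).symm.trans (hall b), ⟨1⟩⟩)
  have hub_cut : ∀ v ∈ Aᶜ, s((1 : G), v) ∈ T := by
    intro v hv
    have hv1 : v ≠ 1 := fun h => hv (h ▸ h1A)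
    by_contra hnotin
    refine hv ?_
    show (Γ.deleteEdges T).Reachable 1 v
    exact SimpleGraph.Adj.reachable
      (by rw [SimpleGraph.deleteEdges_adj]; exact ⟨hub_adj hv1, hnotin⟩)
  have hcut : ∀ v ∈ Aᶜ, ∀ w ∈ A, Γ.Adj v w → s(v, w) ∈ T := by
    intro v hv w hw hadj
    by_contra hnotin
    have hadj' : (Γ.deleteEdges T).Adj w v := by
      rw [SimpleGraph.deleteEdges_adj]
      exact ⟨hadj.symm, by rwa [Sym2.eq_swap]⟩
    exact hv ((hw : (Γ.deleteEdges T).Reachable 1 w).trans hadj'.reachable)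
  set k := Aᶜ.ncard with hk
  -- boundary and hub edge sets for a vertex v ∈ Aᶜ
  have hBcard : ∀ v : G, ((fun w => s(v, w)) '' (Γ.neighborSet v ∩ A)).ncard
      = (Γ.neighborSet v ∩ A).ncard := by
    intro v
    apply Set.ncard_image_of_injOn
    intro w hw w' _ hww
    rcases Sym2.eq_iff.mp hww with ⟨_, h⟩ | ⟨_, h2⟩
    · exact h
    · exact absurd h2 ((Γ.mem_neighborSet v w).mp hw.1).ne'
  have hBsub : ∀ v ∈ Aᶜ, ((fun w => s(v, w)) '' (Γ.neighborSet v ∩ A)) ⊆ T := by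
    rintro v hv ε ⟨w, ⟨hwnb, hwA⟩, rfl⟩
    exact hcut v hv w hwA hwnb
  have hHcard : ∀ v ∈ Aᶜ, ((fun w => s((1 : G), w)) '' (Aᶜ \ {v})).ncard = k - 1 := by
    intro v hv
    rw [Set.ncard_image_of_injOn, Set.ncard_diff_singleton_of_mem hv]
    intro w hw w' hw' hww
    rcases Sym2.eq_iff.mp hww with ⟨_, h⟩ | ⟨h1, h2⟩
    · exact h
    · exact absurd (h1.symm ▸ h1A) hw'.1
  have hHsub : ∀ v ∈ Aᶜ, ((fun w => s((1 : G), w)) '' (Aᶜ \ {v})) ⊆ T := by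
    rintro v hv ε ⟨w, ⟨hwAc, _⟩, rfl⟩
    exact hub_cut w hwAc
  have hBHdisj : ∀ v ∈ Aᶜ, Disjoint ((fun w => s(v, w)) '' (Γ.neighborSet v ∩ A))
      ((fun w => s((1 : G), w)) '' (Aᶜ \ {v})) := by
    intro v hv
    rw [Set.disjoint_left]
    rintro ε ⟨w, ⟨_, hwA⟩, rfl⟩ ⟨w', ⟨hw'Ac, hw'ne⟩, heq⟩
    rcases Sym2.eq_iff.mp heq with ⟨h1, h2⟩ | ⟨h1, h2⟩
    · exact hv (h1 ▸ h1A)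
    · exact hw'ne (by rw [h2]; exact Set.mem_singleton v)
  have hdegle : ∀ v ∈ Aᶜ, gDeg Γ v ≤ (Γ.neighborSet v ∩ A).ncard + (k - 1) := by
    intro v hv
    have hsub : Γ.neighborSet v ∩ Aᶜ ⊆ Aᶜ \ {v} := by
      rintro w ⟨hw1, hw2⟩
      exact ⟨hw2, fun h => ((Γ.mem_neighborSet v w).mp hw1).ne' (by simpa using h)⟩
    have h2 : (Γ.neighborSet v ∩ Aᶜ).ncard ≤ k - 1 := by
      calc (Γ.neighborSet v ∩ Aᶜ).ncard ≤ (Aᶜ \ {v}).ncard :=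
            Set.ncard_le_ncard hsub (Set.toFinite _)
      _ = k - 1 := Set.ncard_diff_singleton_of_mem hv
    have hsplit : Γ.neighborSet v = (Γ.neighborSet v ∩ A) ∪ (Γ.neighborSet v ∩ Aᶜ) :=
      (Set.inter_union_compl _ _).symm
    have hle := Set.ncard_union_le (Γ.neighborSet v ∩ A) (Γ.neighborSet v ∩ Aᶜ)
    rw [Set.inter_union_compl] at hle
    calc gDeg Γ v = (Γ.neighborSet v).ncard := rfl
    _ ≤ (Γ.neighborSet v ∩ A).ncard + (Γ.neighborSet v ∩ Aᶜ).ncard := hle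
    _ ≤ (Γ.neighborSet v ∩ A).ncard + (k - 1) := by omega
  by_cases hxA : x ∈ A
  · -- the deleted edge has both ends in A; count at any v ∈ Aᶜ
    obtain ⟨v, hv⟩ := hAc
    set B := (fun w => s(v, w)) '' (Γ.neighborSet v ∩ A) with hB
    set Hb := (fun w => s((1 : G), w)) '' (Aᶜ \ {v}) with hHb
    have hv1 : v ≠ 1 := fun h => hv (h ▸ h1A)
    have henotin : s((1 : G), x) ∉ B ∪ Hb := by
      rintro (⟨w, ⟨_, hwA⟩, heq⟩ | ⟨w, ⟨hwAc, _⟩, heq⟩)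
      · rcases Sym2.eq_iff.mp heq with ⟨h1, _⟩ | ⟨h1, _⟩
        · exact hv (h1.symm ▸ h1A)
        · exact hv (h1.symm ▸ hxA)
      · rcases Sym2.eq_iff.mp heq with ⟨_, h2⟩ | ⟨h1, _⟩
        · exact hwAc (h2 ▸ hxA)
        · exact hx1 h1.symm
    have hCsub : insert s((1 : G), x) (B ∪ Hb) ⊆ T :=
      Set.insert_subset heT (Set.union_subset (hBsub v hv) (hHsub v hv))
    have hCcard : gDeg Γ v + 1 ≤ (insert s((1 : G), x) (B ∪ Hb)).ncard := by
      rw [Set.ncard_insert_of_notMem henotin (Set.toFinite _),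
        Set.ncard_union_eq (hBHdisj v hv) (Set.toFinite _) (Set.toFinite _),
        hBcard v, hHcard v hv]
      have := hdegle v hv
      omega
    have hfin : (insert s((1 : G), x) (B ∪ Hb)).ncard ≤ T.ncard :=
      Set.ncard_le_ncard hCsub (Set.toFinite _)
    have hκv : edgeConn Γ ≤ gDeg Γ v := edgeConn_le_gDeg Γ v hv1
    omega
  · -- x itself lies in Aᶜ
    have hv : x ∈ Aᶜ := hxA
    have hCsub : ((fun w => s(x, w)) '' (Γ.neighborSet x ∩ A))
        ∪ ((fun w => s((1 : G), w)) '' (Aᶜ \ {x})) ⊆ T :=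
      Set.union_subset (hBsub x hv) (hHsub x hv)
    have hCcard : gDeg Γ x ≤ (((fun w => s(x, w)) '' (Γ.neighborSet x ∩ A))
        ∪ ((fun w => s((1 : G), w)) '' (Aᶜ \ {x}))).ncard := by
      rw [Set.ncard_union_eq (hBHdisj x hv) (Set.toFinite _) (Set.toFinite _),
        hBcard x, hHcard x hv]
      exact hdegle x hv
    have hfin := Set.ncard_le_ncard hCsub (Set.toFinite (α := Sym2 G) _)
    omega
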